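/- Suppose β₁ = 0, β₂ > |α₀|, and let ω₀ be the unique positive solution of (ω² − α₀)² + α₁²ω² = β₂². Then for every ω > 0 and all τ₁, τ₂ ∈ ℝ: χ(iω) = 0 holds if and only if ω = ω₀ and β₂·exp(−iω₀τ₂) = (ω₀² − α₀) − i·α₁ω₀; in particular the condition is independent of τ₁, so the set of delay pairs (τ_I, τ_G) = (τ₁, τ₂ − τ₁) admitting a purely imaginary characteristic root iω with ω > 0 is a union of lines on which τ_I + τ_G is constant (lines of slope −1 in the (τ_I, τ_G)-plane), the constants differing by integer multiples of 2π/ω₀. -/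

import Mathlib

/-- The characteristic function `χ(λ) = λ² + α₁λ + α₀ + β₁·exp(−λτ₁) + β₂·exp(−λτ₂)`
of the linearized two-delay glucose–insulin model. -/
noncomputable def chi (α₀ α₁ β₁ β₂ τ₁ τ₂ : ℝ) (lam : ℂ) : ℂ :=
  lam ^ 2 + (α₁ : ℂ) * lam + (α₀ : ℂ) + (β₁ : ℂ) * Complex.exp (-lam * (τ₁ : ℂ))
    + (β₂ : ℂ) * Complex.exp (-lam * (τ₂ : ℂ))

/-- Zeroth-order limit `β₁ = 0` of the small-`β₁` perturbation analysis: with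
`β₂ > |α₀|` and `ω₀` the unique positive solution of `(ω² − α₀)² + α₁²ω² = β₂²`,
a purely imaginary root `χ(iω) = 0` with `ω > 0` occurs if and only if `ω = ω₀` and
`β₂·exp(−iω₀τ₂) = (ω₀² − α₀) − iα₁ω₀`; the condition is independent of `τ₁` and depends
only on `τ₂ = τ_I + τ_G`, and any two admissible values of `τ₂` differ by an integer
multiple of `2π/ω₀` (lines of slope `−1` in the `(τ_I, τ_G)`-plane). -/
theorem stmt6 (α₀ α₁ β₁ β₂ ω₀ : ℝ) (hβ₁ : β₁ = 0) (hβ₂ : |α₀| < β₂)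
    (hω₀ : 0 < ω₀) (heq : (ω₀ ^ 2 - α₀) ^ 2 + α₁ ^ 2 * ω₀ ^ 2 = β₂ ^ 2)
    (huniq : ∀ ω : ℝ, 0 < ω →
      (ω ^ 2 - α₀) ^ 2 + α₁ ^ 2 * ω ^ 2 = β₂ ^ 2 → ω = ω₀) :
    (∀ ω : ℝ, 0 < ω → ∀ τ₁ τ₂ : ℝ,
      (chi α₀ α₁ β₁ β₂ τ₁ τ₂ (Complex.I * (ω : ℂ)) = 0 ↔
        ω = ω₀ ∧ (β₂ : ℂ) * Complex.exp (-(Complex.I * (ω₀ : ℂ)) * (τ₂ : ℂ)) =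
          ((ω₀ ^ 2 - α₀ : ℝ) : ℂ) - Complex.I * ((α₁ * ω₀ : ℝ) : ℂ))) ∧
    (∀ τ₂ τ₂' : ℝ,
      (β₂ : ℂ) * Complex.exp (-(Complex.I * (ω₀ : ℂ)) * (τ₂ : ℂ)) =
        ((ω₀ ^ 2 - α₀ : ℝ) : ℂ) - Complex.I * ((α₁ * ω₀ : ℝ) : ℂ) →
      (β₂ : ℂ) * Complex.exp (-(Complex.I * (ω₀ : ℂ)) * (τ₂' : ℂ)) =
        ((ω₀ ^ 2 - α₀ : ℝ) : ℂ) - Complex.I * ((α₁ * ω₀ : ℝ) : ℂ) →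
      ∃ n : ℤ, τ₂' = τ₂ + n * (2 * Real.pi / ω₀)) := by

  have hβ₂pos : (0:ℝ) < β₂ := lt_of_le_of_lt (abs_nonneg α₀) hβ₂
  constructor
  · intro ω hω τ₁ τ₂
    have hchi : chi α₀ α₁ β₁ β₂ τ₁ τ₂ (Complex.I * (ω : ℂ)) = 0 ↔
        (β₂ : ℂ) * Complex.exp (-(Complex.I * (ω : ℂ)) * (τ₂ : ℂ))
          = ((ω ^ 2 - α₀ : ℝ) : ℂ) - Complex.I * ((α₁ * ω : ℝ) : ℂ) := by
      unfold chi
      rw [hβ₁]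
      push_cast
      constructor
      · intro h
        linear_combination h - (ω:ℂ)^2 * Complex.I_sq
      · intro h
        linear_combination h + (ω:ℂ)^2 * Complex.I_sq
    rw [hchi]
    constructor
    · intro hE
      have h1 : ‖(β₂:ℂ) * Complex.exp (-(Complex.I * (ω:ℂ)) * (τ₂:ℂ))‖ = β₂ := by
        rw [norm_mul, Complex.norm_exp]
        simp [abs_of_pos hβ₂pos]
      have haux : ∀ a b : ℝ, ‖(a:ℂ) - Complex.I * (b:ℂ)‖ ^ 2 = a ^ 2 + b ^ 2 := by
        intro a b
        rw [Complex.sq_norm, Complex.normSq_apply]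
        simp
        ring
      have h2 : ‖((ω ^ 2 - α₀ : ℝ):ℂ) - Complex.I * ((α₁ * ω : ℝ):ℂ)‖ ^ 2
          = (ω ^ 2 - α₀) ^ 2 + α₁ ^ 2 * ω ^ 2 := by
        rw [haux]
        ring
      have heqω : (ω ^ 2 - α₀) ^ 2 + α₁ ^ 2 * ω ^ 2 = β₂ ^ 2 := by
        rw [← h2, hE] at *
        rw [← h1, hE]
      have hωω₀ : ω = ω₀ := huniq ω hω heqω
      subst hωω₀
      exact ⟨rfl, hE⟩
    · rintro ⟨rfl, hE⟩
      exact hE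
  · intro τ₂ τ₂' h h'
    have hb : ((β₂:ℂ)) ≠ 0 := by
      exact_mod_cast ne_of_gt hβ₂pos
    have hexp : Complex.exp (-(Complex.I * (ω₀:ℂ)) * (τ₂':ℂ))
        = Complex.exp (-(Complex.I * (ω₀:ℂ)) * (τ₂:ℂ)) := by
      have := h'.trans h.symm
      exact mul_left_cancel₀ hb this
    rw [Complex.exp_eq_exp_iff_exists_int] at hexp
    obtain ⟨n, hn⟩ := hexp
    have him := congrArg Complex.im hn
    simp [Complex.mul_im, Complex.mul_re] at him
    refine ⟨-n, ?_⟩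
    have hω₀' : ω₀ ≠ 0 := ne_of_gt hω₀
    push_cast
    field_simp
    nlinarith [him, Real.pi_pos]
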